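/- Let G be a parity game, α ∈ {0,1} a player, and R ⊆ Pos an α-region in G. Then R★ := atr^α(R), the α-attractor of R in G, is an α-maximal α-region in G. -/

import Mathlib

open Filter Set

/-- A parity game: disjoint finite sets of positions of players 0 and 1, a left-total
move relation among positions, and a priority function. -/
structure PGame (V : Type*) where
  pos0 : Set V
  pos1 : Set V
  mv : V → V → Prop
  pr : V → ℕ
  disj : Disjoint pos0 pos1
  finpos : (pos0 ∪ pos1).Finite
  mv_mem : ∀ ⦃v u : V⦄, mv v u → v ∈ pos0 ∪ pos1 ∧ u ∈ pos0 ∪ pos1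
  leftTotal : ∀ v ∈ pos0 ∪ pos1, ∃ u, mv v u

namespace PGame

variable {V : Type*}

/-- The set of positions of the game. -/
def pos (G : PGame V) : Set V := G.pos0 ∪ G.pos1

/-- The positions of player `α` (`α ∈ {0,1}`; the opponent of `α` is `1 - α`). -/
def posOf (G : PGame V) (α : ℕ) : Set V := if α = 0 then G.pos0 else G.pos1

/-- The maximal priority `pr(G)` of the game. -/
noncomputable def maxPr (G : PGame V) : ℕ := sSup (G.pr '' G.pos)

/-- `pre^α(U)`: positions from which player `α` can force reaching `U` in one move. -/
def pre (G : PGame V) (α : ℕ) (U : Set V) : Set V :=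
  {v ∈ G.posOf α | ∃ u ∈ U, G.mv v u} ∪
    {v ∈ G.posOf (1 - α) | ∀ u, G.mv v u → u ∈ U}

lemma pre_mono (G : PGame V) (α : ℕ) : Monotone (G.pre α) := by
  intro U U' h v hv
  rcases hv with ⟨h1, u, hu, hm⟩ | ⟨h1, h2⟩
  · exact Or.inl ⟨h1, u, h hu, hm⟩
  · exact Or.inr ⟨h1, fun u hm => h (h2 u hm)⟩

/-- `atr^α(A)`: the `α`-attractor of `A`, the least fixed point of `U ↦ A ∪ pre^α(U)`. -/
noncomputable def atr (G : PGame V) (α : ℕ) (A : Set V) : Set V :=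
  OrderHom.lfp ⟨fun U => A ∪ G.pre α U, fun U U' h => union_subset_union subset_rfl (G.pre_mono α h)⟩

/-- `A` is `α`-maximal if it coincides with its own `α`-attractor. -/
def IsMaximal (G : PGame V) (α : ℕ) (A : Set V) : Prop := G.atr α A = A

/-- `esc^α(Q)`: the `α`-escape of `Q`. -/
def esc (G : PGame V) (α : ℕ) (Q : Set V) : Set V := G.pre α (G.pos \ Q) ∩ Q

/-- `int^α(Q)`: the `α`-interior of `Q`. -/
def intOf (G : PGame V) (α : ℕ) (Q : Set V) : Set V := (Q ∩ G.posOf α) \ G.esc α Q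

/-- A positional `α`-strategy on `U`: a partial function (encoded with `Option`) from
`U ∩ Pos_α` to `U` compatible with the move relation. -/
def IsStrat (G : PGame V) (α : ℕ) (U : Set V) (σ : V → Option V) : Prop :=
  ∀ v u, σ v = some u → v ∈ U ∩ G.posOf α ∧ u ∈ U ∧ G.mv v u

-- One step of the play function: from `v`, player 0 positions move according to `σ0`,
-- the others according to `σ1`.
open Classical in
noncomputable def step (G : PGame V) (σ0 σ1 : V → Option V) (v : V) : Option V :=
  if v ∈ G.pos0 then σ0 v else σ1 v

/-- The maximal play induced by the pair of strategies `(σ0, σ1)` from `v`,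
as a sequence of `Option`s (`none` from the point the play has stopped on). -/
noncomputable def play (G : PGame V) (σ0 σ1 : V → Option V) (v : V) : ℕ → Option V
  | 0 => some v
  | n + 1 => (G.play σ0 σ1 v n).bind (G.step σ0 σ1)

/-- The priorities visited along a play (defaulting to `0` after the play has stopped). -/
noncomputable def playPr (G : PGame V) (σ0 σ1 : V → Option V) (v : V) (n : ℕ) : ℕ :=
  ((G.play σ0 σ1 v n).map G.pr).getD 0

/-- `Q` is a quasi `α`-dominion in `G`. -/
noncomputable def QuasiDom (G : PGame V) (α : ℕ) (Q : Set V) : Prop :=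
  Q.Nonempty ∧ Q ⊆ G.pos ∧
  ∃ σa : V → Option V, G.IsStrat α Q σa ∧
    ∀ σb : V → Option V, G.IsStrat (1 - α) Q σb →
      G.intOf (1 - α) Q ⊆ {v | (σb v).isSome} →
      ∀ v ∈ Q,
        (((∀ n, (G.play (if α = 0 then σa else σb) (if α = 0 then σb else σa) v n).isSome) →
          Filter.limsup (G.playPr (if α = 0 then σa else σb) (if α = 0 then σb else σa) v)
            Filter.atTop % 2 = α) ∧
        (∀ n u, G.play (if α = 0 then σa else σb) (if α = 0 then σb else σa) v n = some u →
          G.play (if α = 0 then σa else σb) (if α = 0 then σb else σa) v (n + 1) = none →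
          u ∈ G.esc (1 - α) Q))

/-- A quasi `α`-dominion `R` is an `α`-region of `G` when `pr(G) ≡₂ α` and all the
positions in its `ᾱ`-escape have the maximal priority `pr(G)`. -/
noncomputable def IsRegion (G : PGame V) (α : ℕ) (R : Set V) : Prop :=
  G.QuasiDom α R ∧ G.maxPr % 2 = α ∧ ∀ v ∈ G.esc (1 - α) R, G.pr v = G.maxPr

/-- `D` is an `α`-dominion in `G`: player `α` has a strategy defined on all of
`D ∩ Pos_α` such that all induced paths starting in `D` stay in `D` forever and are
winning for `α`. -/
noncomputable def Dominion (G : PGame V) (α : ℕ) (D : Set V) : Prop :=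
  D ⊆ G.pos ∧
  ∃ σ : V → V, (∀ v ∈ D ∩ G.posOf α, σ v ∈ D ∧ G.mv v (σ v)) ∧
    ∀ π : ℕ → V, π 0 ∈ D →
      (∀ i, (π i ∈ G.posOf α → π (i + 1) = σ (π i)) ∧
            (π i ∈ G.posOf (1 - α) → G.mv (π i) (π (i + 1)))) →
      (∀ i, π i ∈ D) ∧ Filter.limsup (fun i => G.pr (π i)) Filter.atTop % 2 = α

/-- The winning region of player `α` in `G`. -/
noncomputable def Win (G : PGame V) (α : ℕ) : Set V :=
  {v ∈ G.pos | ∃ σ : V → V, (∀ u ∈ G.posOf α, G.mv u (σ u)) ∧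
    ∀ π : ℕ → V, π 0 = v →
      (∀ i, (π i ∈ G.posOf α → π (i + 1) = σ (π i)) ∧
            (π i ∈ G.posOf (1 - α) → G.mv (π i) (π (i + 1)))) →
      Filter.limsup (fun i => G.pr (π i)) Filter.atTop % 2 = α}

/-- The set of positions of the subgame `G ∖ U`: the largest subset of `Pos ∖ U` on
which the restricted move relation is still left-total. -/
def subPos (G : PGame V) (U : Set V) : Set V :=
  ⋃₀ {S : Set V | S ⊆ G.pos \ U ∧ ∀ v ∈ S, ∃ u ∈ S, G.mv v u}

lemma subPos_subset (G : PGame V) (U : Set V) : G.subPos U ⊆ G.pos \ U := by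
  rintro v ⟨S, ⟨hS1, _⟩, hvS⟩
  exact hS1 hvS

lemma subPos_step (G : PGame V) (U : Set V) :
    ∀ v ∈ G.subPos U, ∃ u ∈ G.subPos U, G.mv v u := by
  rintro v ⟨S, hS, hvS⟩
  rcases hS.2 v hvS with ⟨u, huS, hm⟩
  exact ⟨u, ⟨S, hS, huS⟩, hm⟩

/-- The subgame `G ∖ U`: the maximal subgame of `G` whose positions are contained in
`Pos ∖ U`, with the restricted move relation. -/
noncomputable def sub (G : PGame V) (U : Set V) : PGame V where
  pos0 := G.pos0 ∩ G.subPos U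
  pos1 := G.pos1 ∩ G.subPos U
  mv v u := G.mv v u ∧ v ∈ G.subPos U ∧ u ∈ G.subPos U
  pr := G.pr
  disj := G.disj.mono inter_subset_left inter_subset_left
  finpos := G.finpos.subset (union_subset_union inter_subset_left inter_subset_left)
  mv_mem := by
    rintro v u ⟨hm, hv, hu⟩
    have hv' : v ∈ G.pos := (G.subPos_subset U hv).1
    have hu' : u ∈ G.pos := (G.subPos_subset U hu).1
    constructor
    · rcases hv' with h | h
      · exact Or.inl ⟨h, hv⟩
      · exact Or.inr ⟨h, hv⟩
    · rcases hu' with h | h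
      · exact Or.inl ⟨h, hu⟩
      · exact Or.inr ⟨h, hu⟩
  leftTotal := by
    intro v hv
    have hv' : v ∈ G.subPos U := by
      rcases hv with ⟨_, h⟩ | ⟨_, h⟩ <;> exact h
    rcases G.subPos_step U v hv' with ⟨u, hu, hm⟩
    exact ⟨u, hm, hv', hu⟩

end PGame


section Aux

open Classical Filter

namespace PGame

variable {V : Type*}

lemma posOf_subset_pos (G : PGame V) (β : ℕ) : G.posOf β ⊆ G.pos := by
  unfold posOf pos
  split
  · exact Set.subset_union_left
  · exact Set.subset_union_right

lemma mv_pos_left (G : PGame V) {v u : V} (h : G.mv v u) : v ∈ G.pos := (G.mv_mem h).1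

lemma mv_pos_right (G : PGame V) {v u : V} (h : G.mv v u) : u ∈ G.pos := (G.mv_mem h).2

lemma posOf_not_opp (G : PGame V) {α : ℕ} (hα : α = 0 ∨ α = 1) {v : V}
    (h1 : v ∈ G.posOf α) (h2 : v ∈ G.posOf (1 - α)) : False := by
  rcases hα with rfl | rfl
  · norm_num [posOf] at h1 h2
    exact Set.disjoint_left.mp G.disj h1 h2
  · norm_num [posOf] at h1 h2
    exact Set.disjoint_left.mp G.disj h2 h1

lemma pos_mem_cases (G : PGame V) {α : ℕ} (hα : α = 0 ∨ α = 1) {v : V} (hv : v ∈ G.pos) :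
    v ∈ G.posOf α ∨ v ∈ G.posOf (1 - α) := by
  rcases hα with rfl | rfl <;> norm_num [posOf, pos] at hv ⊢ <;> tauto

lemma pre_subset_pos (G : PGame V) (β : ℕ) (U : Set V) : G.pre β U ⊆ G.pos := by
  rintro v (⟨h, -⟩ | ⟨h, -⟩) <;> exact G.posOf_subset_pos _ h

lemma atr_eq (G : PGame V) (α : ℕ) (A : Set V) :
    G.atr α A = A ∪ G.pre α (G.atr α A) := by
  unfold atr
  exact (OrderHom.map_lfp _).symm

lemma subset_atr (G : PGame V) (α : ℕ) (A : Set V) : A ⊆ G.atr α A := by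
  conv_rhs => rw [G.atr_eq α A]
  exact Set.subset_union_left

lemma pre_atr_subset (G : PGame V) (α : ℕ) (A : Set V) :
    G.pre α (G.atr α A) ⊆ G.atr α A := by
  conv_rhs => rw [G.atr_eq α A]
  exact Set.subset_union_right

lemma atr_le (G : PGame V) (α : ℕ) (A U : Set V) (h : A ∪ G.pre α U ⊆ U) :
    G.atr α A ⊆ U :=
  OrderHom.lfp_le _ h

lemma atr_subset_pos (G : PGame V) (α : ℕ) (A : Set V) (h : A ⊆ G.pos) :
    G.atr α A ⊆ G.pos :=
  G.atr_le α A G.pos (Set.union_subset h (G.pre_subset_pos α G.pos))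

lemma atr_maximal (G : PGame V) (α : ℕ) (A : Set V) :
    G.atr α (G.atr α A) = G.atr α A := by
  apply subset_antisymm
  · exact G.atr_le α _ _ (Set.union_subset subset_rfl (G.pre_atr_subset α A))
  · exact G.subset_atr α (G.atr α A)

/-- The approximants of the attractor. -/
def itA (G : PGame V) (α : ℕ) (R : Set V) : ℕ → Set V
  | 0 => ∅
  | k + 1 => R ∪ G.pre α (itA G α R k)

/-- Attractor rank. -/
noncomputable def rkA (G : PGame V) (α : ℕ) (R : Set V) (v : V) : ℕ :=
  sInf {k | v ∈ itA G α R k}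

lemma itA_subset_succ (G : PGame V) (α : ℕ) (R : Set V) (k : ℕ) :
    itA G α R k ⊆ itA G α R (k + 1) := by
  induction k with
  | zero => exact Set.empty_subset _
  | succ k ih => exact Set.union_subset_union subset_rfl (G.pre_mono α ih)

lemma itA_mono (G : PGame V) (α : ℕ) (R : Set V) {k l : ℕ} (h : k ≤ l) :
    itA G α R k ⊆ itA G α R l := by
  induction l with
  | zero => simp_all
  | succ l ih =>
    rcases Nat.lt_or_ge k (l + 1) with h' | h'
    · exact (ih (by omega)).trans (G.itA_subset_succ α R l)
    · have : k = l + 1 := by omega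
      subst this; exact subset_rfl

lemma itA_subset_atr (G : PGame V) (α : ℕ) (R : Set V) (k : ℕ) :
    itA G α R k ⊆ G.atr α R := by
  induction k with
  | zero => exact Set.empty_subset _
  | succ k ih =>
    refine Set.union_subset (G.subset_atr α R) ?_
    exact (G.pre_mono α ih).trans (G.pre_atr_subset α R)

lemma atr_subset_iUnion (G : PGame V) (α : ℕ) (R : Set V) :
    G.atr α R ⊆ ⋃ k, itA G α R k := by
  apply G.atr_le
  rintro v (hv | hv)
  · exact Set.mem_iUnion.mpr ⟨1, Or.inl hv⟩
  · rcases hv with ⟨hvα, u, hu, hm⟩ | ⟨hvβ, hall⟩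
    · obtain ⟨k, hk⟩ := Set.mem_iUnion.mp hu
      exact Set.mem_iUnion.mpr ⟨k + 1, Or.inr (Or.inl ⟨hvα, u, hk, hm⟩)⟩
    · classical
      have hS : {u | G.mv v u}.Finite :=
        G.finpos.subset (fun u hu => (G.mv_mem hu).2)
      set kf : V → ℕ := fun u => sInf {k | u ∈ itA G α R k} with hkf
      set K : ℕ := hS.toFinset.sup kf with hK
      refine Set.mem_iUnion.mpr ⟨K + 1, Or.inr (Or.inr ⟨hvβ, fun u hm => ?_⟩)⟩
      have hne : {k | u ∈ itA G α R k}.Nonempty := by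
        obtain ⟨k, hk⟩ := Set.mem_iUnion.mp (hall u hm)
        exact ⟨k, hk⟩
      have h1 : u ∈ itA G α R (kf u) := Nat.sInf_mem hne
      have h2 : kf u ≤ K := Finset.le_sup (hS.mem_toFinset.mpr hm)
      exact G.itA_mono α R h2 h1

lemma mem_itA_rk (G : PGame V) (α : ℕ) (R : Set V) {v : V} (hv : v ∈ G.atr α R) :
    v ∈ itA G α R (rkA G α R v) := by
  have hne : {k | v ∈ itA G α R k}.Nonempty := by
    obtain ⟨k, hk⟩ := Set.mem_iUnion.mp (G.atr_subset_iUnion α R hv)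
    exact ⟨k, hk⟩
  exact Nat.sInf_mem hne

lemma rkA_le (G : PGame V) (α : ℕ) (R : Set V) {v : V} {k : ℕ} (h : v ∈ itA G α R k) :
    rkA G α R v ≤ k :=
  Nat.sInf_le h

lemma rkA_ne_zero (G : PGame V) (α : ℕ) (R : Set V) {v : V} (hv : v ∈ G.atr α R) :
    rkA G α R v ≠ 0 := by
  intro h
  have := G.mem_itA_rk α R hv
  rw [h] at this
  exact this

lemma mem_pre_rk (G : PGame V) (α : ℕ) (R : Set V) {v : V}
    (hv : v ∈ G.atr α R) (hvR : v ∉ R) :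
    v ∈ G.pre α (itA G α R (rkA G α R v - 1)) := by
  have h1 := G.mem_itA_rk α R hv
  have h2 := G.rkA_ne_zero α R hv
  have h3 : rkA G α R v = (rkA G α R v - 1) + 1 := by omega
  rw [h3] at h1
  rcases h1 with h1 | h1
  · exact absurd h1 hvR
  · exact h1

lemma esc_mem_alpha (G : PGame V) {α : ℕ} (hα : α = 0 ∨ α = 1) {Q : Set V} {v : V}
    (hvα : v ∈ G.posOf α) :
    v ∈ G.esc (1 - α) Q ↔ v ∈ Q ∧ ∀ u, G.mv v u → u ∈ G.pos \ Q := by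
  have e : 1 - (1 - α) = α := by omega
  constructor
  · rintro ⟨⟨h1, -⟩ | ⟨-, h2⟩, hQ⟩
    · exact (G.posOf_not_opp hα hvα h1).elim
    · exact ⟨hQ, h2⟩
  · rintro ⟨hQ, h⟩
    exact ⟨Or.inr ⟨by rw [e]; exact hvα, h⟩, hQ⟩

lemma esc_mem_beta (G : PGame V) {α : ℕ} (hα : α = 0 ∨ α = 1) {Q : Set V} {v : V}
    (hvβ : v ∈ G.posOf (1 - α)) :
    v ∈ G.esc (1 - α) Q ↔ v ∈ Q ∧ ∃ u, G.mv v u ∧ u ∈ G.pos \ Q := by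
  have e : 1 - (1 - α) = α := by omega
  constructor
  · rintro ⟨⟨-, u, hu, hm⟩ | ⟨h1, -⟩, hQ⟩
    · exact ⟨hQ, u, hm, hu⟩
    · rw [e] at h1
      exact (G.posOf_not_opp hα h1 hvβ).elim
  · rintro ⟨hQ, u, hm, hu⟩
    exact ⟨Or.inl ⟨hvβ, u, hu, hm⟩, hQ⟩

lemma int_mem_beta (G : PGame V) {α : ℕ} (hα : α = 0 ∨ α = 1) {Q : Set V} {v : V}
    (hvβ : v ∈ G.posOf (1 - α)) :
    v ∈ G.intOf (1 - α) Q ↔ v ∈ Q ∧ ∀ u, G.mv v u → u ∈ Q := by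
  constructor
  · rintro ⟨⟨hQ, -⟩, hesc⟩
    refine ⟨hQ, fun u hm => ?_⟩
    by_contra hu
    exact hesc ((G.esc_mem_beta hα hvβ).mpr ⟨hQ, u, hm, G.mv_pos_right hm, hu⟩)
  · rintro ⟨hQ, hall⟩
    refine ⟨⟨hQ, hvβ⟩, fun hesc => ?_⟩
    obtain ⟨-, u, hm, -, hu⟩ := (G.esc_mem_beta hα hvβ).mp hesc
    exact hu (hall u hm)

lemma step_alpha (G : PGame V) {α : ℕ} (hα : α = 0 ∨ α = 1) (x y : V → Option V) {v : V}
    (hv : v ∈ G.posOf α) :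
    G.step (if α = 0 then x else y) (if α = 0 then y else x) v = x v := by
  rcases hα with rfl | rfl
  · norm_num [posOf] at hv
    simp [step, hv]
  · norm_num [posOf] at hv
    have h0 : v ∉ G.pos0 := fun h => Set.disjoint_left.mp G.disj h hv
    norm_num [step, h0]

lemma step_beta (G : PGame V) {α : ℕ} (hα : α = 0 ∨ α = 1) (x y : V → Option V) {v : V}
    (hv : v ∈ G.posOf (1 - α)) :
    G.step (if α = 0 then x else y) (if α = 0 then y else x) v = y v := by
  rcases hα with rfl | rfl
  · norm_num [posOf] at hv
    have h0 : v ∉ G.pos0 := fun h => Set.disjoint_left.mp G.disj h hv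
    norm_num [step, h0]
  · norm_num [posOf] at hv
    norm_num [step, hv]

/-- The strategy of player `α` on the attractor of a region `R`. -/
noncomputable def sigA (G : PGame V) (α : ℕ) (R : Set V) (σR : V → Option V) (v : V) :
    Option V :=
  if v ∈ R then
    if (σR v).isSome then σR v
    else if h : v ∈ G.posOf α ∧ v ∉ G.esc (1 - α) (G.atr α R) ∧
        ∃ u, u ∈ G.atr α R ∧ G.mv v u then some h.2.2.choose
    else none
  else if h : v ∈ G.atr α R ∧ v ∈ G.posOf α ∧
      ∃ u, u ∈ itA G α R (rkA G α R v - 1) ∧ G.mv v u then some h.2.2.choose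
  else none

variable {G : PGame V} {α : ℕ} {R : Set V} {σR : V → Option V}

lemma sigA_strat (hσR : G.IsStrat α R σR) :
    G.IsStrat α (G.atr α R) (sigA G α R σR) := by
  intro v u h
  unfold sigA at h
  split_ifs at h with hvR hs h1 h2
  · obtain ⟨⟨hvR', hvα⟩, huR, hm⟩ := hσR v u h
    exact ⟨⟨G.subset_atr α R hvR', hvα⟩, G.subset_atr α R huR, hm⟩
  · have spec := h1.2.2.choose_spec
    have : h1.2.2.choose = u := by injection h
    rw [this] at spec
    exact ⟨⟨G.subset_atr α R hvR, h1.1⟩, spec.1, spec.2⟩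
  · have spec := h2.2.2.choose_spec
    have : h2.2.2.choose = u := by injection h
    rw [this] at spec
    exact ⟨⟨h2.1, h2.2.1⟩, G.itA_subset_atr α R _ spec.1, spec.2⟩

lemma sigA_none (hα : α = 0 ∨ α = 1) {v : V} (hv : v ∈ G.atr α R)
    (hvα : v ∈ G.posOf α) (h : sigA G α R σR v = none) :
    v ∈ G.esc (1 - α) (G.atr α R) := by
  unfold sigA at h
  by_cases hvR : v ∈ R
  · rw [if_pos hvR] at h
    by_cases hs : (σR v).isSome
    · rw [if_pos hs] at h
      rw [h] at hs
      simp at hs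
    · rw [if_neg hs] at h
      by_cases h1 : v ∈ G.posOf α ∧ v ∉ G.esc (1 - α) (G.atr α R) ∧
          ∃ u, u ∈ G.atr α R ∧ G.mv v u
      · rw [dif_pos h1] at h
        simp at h
      · by_contra hesc
        apply h1
        refine ⟨hvα, hesc, ?_⟩
        by_contra hno
        apply hesc
        rw [G.esc_mem_alpha hα hvα]
        exact ⟨hv, fun u hm => ⟨G.mv_pos_right hm, fun hu => hno ⟨u, hu, hm⟩⟩⟩
  · rw [if_neg hvR] at h
    by_cases h2 : v ∈ G.atr α R ∧ v ∈ G.posOf α ∧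
        ∃ u, u ∈ itA G α R (rkA G α R v - 1) ∧ G.mv v u
    · rw [dif_pos h2] at h
      simp at h
    · exfalso
      apply h2
      refine ⟨hv, hvα, ?_⟩
      have := G.mem_pre_rk α R hv hvR
      rcases this with ⟨-, u, hu, hm⟩ | ⟨hvβ, -⟩
      · exact ⟨u, hu, hm⟩
      · exact (G.posOf_not_opp hα hvα hvβ).elim

lemma sigA_some_cases {v u : V} (hvR : v ∈ R) (h : sigA G α R σR v = some u) :
    σR v = some u ∨
      (σR v = none ∧ v ∉ G.esc (1 - α) (G.atr α R) ∧ u ∈ G.atr α R ∧ G.mv v u ∧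
        v ∈ G.posOf α) := by
  unfold sigA at h
  rw [if_pos hvR] at h
  by_cases hs : (σR v).isSome
  · rw [if_pos hs] at h
    exact Or.inl h
  · rw [if_neg hs] at h
    by_cases h1 : v ∈ G.posOf α ∧ v ∉ G.esc (1 - α) (G.atr α R) ∧
        ∃ u, u ∈ G.atr α R ∧ G.mv v u
    · rw [dif_pos h1] at h
      have spec := h1.2.2.choose_spec
      have he : h1.2.2.choose = u := by injection h
      rw [he] at spec
      exact Or.inr ⟨Option.not_isSome_iff_eq_none.mp hs, h1.2.1, spec.1, spec.2, h1.1⟩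
    · rw [dif_neg h1] at h
      simp at h

lemma sigA_decrease {v u : V} (hvR : v ∉ R) (h : sigA G α R σR v = some u) :
    u ∈ itA G α R (rkA G α R v - 1) := by
  unfold sigA at h
  rw [if_neg hvR] at h
  by_cases h2 : v ∈ G.atr α R ∧ v ∈ G.posOf α ∧
      ∃ u, u ∈ itA G α R (rkA G α R v - 1) ∧ G.mv v u
  · rw [dif_pos h2] at h
    have spec := h2.2.2.choose_spec
    have he : h2.2.2.choose = u := by injection h
    rw [he] at spec
    exact spec.1
  · rw [dif_neg h2] at h
    simp at h

end PGame

open Filter in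
lemma limsup_eq_of_freq (u : ℕ → ℕ) (M : ℕ) (hb : ∀ n, u n ≤ M)
    (hf : ∀ N, ∃ n, N ≤ n ∧ u n = M) : Filter.limsup u Filter.atTop = M := by
  have hbdd : IsBoundedUnder (· ≤ ·) atTop u := Filter.isBoundedUnder_of ⟨M, hb⟩
  apply le_antisymm
  · exact Filter.limsup_le_of_le (by isBoundedDefault) (Filter.Eventually.of_forall hb)
  · refine Filter.le_limsup_of_frequently_le ?_ hbdd
    rw [Filter.frequently_atTop]
    intro N; obtain ⟨n, hn, he⟩ := hf N; exact ⟨n, hn, he.ge⟩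

lemma limsup_shift (u : ℕ → ℕ) (N : ℕ) :
    Filter.limsup (fun n => u (N + n)) Filter.atTop = Filter.limsup u Filter.atTop := by
  have := Filter.limsup_nat_add u N
  simpa [Nat.add_comm] using this

end Aux

open PGame in
/-- **Region Extension.** If `R` is an `α`-region in the parity game `G`, then its
`α`-attractor `atr^α(R)` is an `α`-maximal `α`-region in `G`. -/
theorem region_extension {V : Type*} (G : PGame V) (α : ℕ) (hα : α = 0 ∨ α = 1)
    (R : Set V) (hsub : R ⊆ G.pos) (hR : G.IsRegion α R) :
    G.IsRegion α (G.atr α R) ∧ G.IsMaximal α (G.atr α R) := by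
  classical
  obtain ⟨⟨hne, hRpos, σR, hσR, hplayR⟩, hpar, hescpr⟩ := hR
  have hRA : R ⊆ G.atr α R := G.subset_atr α R
  have hApos : G.atr α R ⊆ G.pos := G.atr_subset_pos α R hsub
  -- the escape of the attractor is contained in the escape of `R`
  have hescsub : G.esc (1 - α) (G.atr α R) ⊆ G.esc (1 - α) R := by
    intro v hv
    have hvpos : v ∈ G.pos := hApos hv.2
    rcases G.pos_mem_cases hα hvpos with hvα | hvβ
    · rw [G.esc_mem_alpha hα hvα] at hv ⊢
      obtain ⟨hvA, hall⟩ := hv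
      have hvR : v ∈ R := by
        by_contra hvR
        rcases G.mem_pre_rk α R hvA hvR with ⟨-, u, hu, hm⟩ | ⟨hvβ, -⟩
        · exact (hall u hm).2 (G.itA_subset_atr α R _ hu)
        · exact G.posOf_not_opp hα hvα hvβ
      exact ⟨hvR, fun u hm => ⟨(hall u hm).1, fun hu => (hall u hm).2 (hRA hu)⟩⟩
    · rw [G.esc_mem_beta hα hvβ] at hv ⊢
      obtain ⟨hvA, u, hm, hupos, huA⟩ := hv
      have hvR : v ∈ R := by
        by_contra hvR
        rcases G.mem_pre_rk α R hvA hvR with ⟨hvα, -⟩ | ⟨-, hall⟩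
        · exact G.posOf_not_opp hα hvα hvβ
        · exact huA (G.itA_subset_atr α R _ (hall u hm))
      exact ⟨hvR, u, hm, hupos, fun hu => huA (hRA hu)⟩
  -- positions of player `α` in `R` where `σR` is undefined lie in the escape of `R`
  have hnone : ∀ v, v ∈ R → v ∈ G.posOf α → σR v = none → v ∈ G.esc (1 - α) R := by
    set σb0 : V → Option V := fun w =>
      if h : w ∈ G.intOf (1 - α) R ∧ ∃ u, G.mv w u ∧ u ∈ R then some h.2.choose
      else none with hσb0
    have hstrat0 : G.IsStrat (1 - α) R σb0 := by
      intro w u hw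
      simp only [hσb0] at hw
      by_cases h : w ∈ G.intOf (1 - α) R ∧ ∃ u, G.mv w u ∧ u ∈ R
      · rw [dif_pos h] at hw
        have spec := h.2.choose_spec
        have he : h.2.choose = u := by injection hw
        rw [he] at spec
        exact ⟨⟨h.1.1.1, h.1.1.2⟩, spec.2, spec.1⟩
      · rw [dif_neg h] at hw
        simp at hw
    have hdom0 : G.intOf (1 - α) R ⊆ {w | (σb0 w).isSome} := by
      intro w hw
      have hwβ : w ∈ G.posOf (1 - α) := hw.1.2
      obtain ⟨hwR, hall⟩ := (G.int_mem_beta hα hwβ).mp hw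
      obtain ⟨u, hm⟩ := G.leftTotal w (hsub hwR)
      have hc : w ∈ G.intOf (1 - α) R ∧ ∃ u, G.mv w u ∧ u ∈ R := ⟨hw, u, hm, hall u hm⟩
      show (σb0 w).isSome
      simp only [hσb0, dif_pos hc, Option.isSome_some]
    intro v hvR hvα hvnone
    refine (hplayR σb0 hstrat0 hdom0 v hvR).2 0 v rfl ?_
    have h1 : G.play (if α = 0 then σR else σb0) (if α = 0 then σb0 else σR) v (0 + 1)
        = G.step (if α = 0 then σR else σb0) (if α = 0 then σb0 else σR) v := by
      simp only [PGame.play, Option.bind_some]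
    rw [h1, G.step_alpha hα σR σb0 hvα]
    exact hvnone
  constructor
  · refine ⟨⟨hne.mono hRA, hApos, sigA G α R σR, sigA_strat hσR, ?_⟩, hpar,
      fun v hv => hescpr v (hescsub hv)⟩
    intro σb hσb hdomb v hv
    set s0 : V → Option V := if α = 0 then sigA G α R σR else σb with hs0
    set s1 : V → Option V := if α = 0 then σb else sigA G α R σR with hs1
    have hstepA : ∀ u, u ∈ G.posOf α → G.step s0 s1 u = sigA G α R σR u := fun u hu => by
      rw [hs0, hs1]; exact G.step_alpha hα _ _ hu
    have hstepB : ∀ u, u ∈ G.posOf (1 - α) → G.step s0 s1 u = σb u := fun u hu => by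
      rw [hs0, hs1]; exact G.step_beta hα _ _ hu
    have hstep1 : ∀ u w, u ∈ G.atr α R → G.step s0 s1 u = some w →
        w ∈ G.atr α R ∧ G.mv u w := by
      intro u w hu hsw
      rcases G.pos_mem_cases hα (hApos hu) with huα | huβ
      · rw [hstepA u huα] at hsw
        obtain ⟨-, hwA, hm⟩ := sigA_strat hσR u w hsw
        exact ⟨hwA, hm⟩
      · rw [hstepB u huβ] at hsw
        obtain ⟨-, hwA, hm⟩ := hσb u w hsw
        exact ⟨hwA, hm⟩
    have hstep2 : ∀ u, u ∈ G.atr α R → G.step s0 s1 u = none →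
        u ∈ G.esc (1 - α) (G.atr α R) := by
      intro u hu hsw
      rcases G.pos_mem_cases hα (hApos hu) with huα | huβ
      · rw [hstepA u huα] at hsw
        exact sigA_none hα hu huα hsw
      · rw [hstepB u huβ] at hsw
        by_contra hesc
        have hint : u ∈ G.intOf (1 - α) (G.atr α R) := ⟨⟨hu, huβ⟩, hesc⟩
        have hd := hdomb hint
        simp only [Set.mem_setOf_eq, hsw] at hd
        simp at hd
    have hstep3 : ∀ u w, u ∈ G.atr α R → u ∉ R → G.step s0 s1 u = some w →
        w ∈ itA G α R (rkA G α R u - 1) := by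
      intro u w hu huR hsw
      rcases G.pos_mem_cases hα (hApos hu) with huα | huβ
      · rw [hstepA u huα] at hsw
        exact sigA_decrease huR hsw
      · rw [hstepB u huβ] at hsw
        have hm := (hσb u w hsw).2.2
        rcases G.mem_pre_rk α R hu huR with ⟨huα, -⟩ | ⟨-, hall⟩
        · exact (G.posOf_not_opp hα huα huβ).elim
        · exact hall w hm
    have hstep4 : ∀ u w, u ∈ R → G.step s0 s1 u = some w → w ∉ R →
        u ∈ G.esc (1 - α) R := by
      intro u w hu hsw hwR
      rcases G.pos_mem_cases hα (hsub hu) with huα | huβ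
      · rw [hstepA u huα] at hsw
        rcases sigA_some_cases hu hsw with hc | ⟨hn, -, -, -, -⟩
        · exact absurd (hσR u w hc).2.1 hwR
        · exact hnone u hu huα hn
      · rw [hstepB u huβ] at hsw
        have hm := (hσb u w hsw).2.2
        exact (G.esc_mem_beta hα huβ).mpr ⟨hu, w, hm, G.mv_pos_right hm, hwR⟩
    have hstep5 : ∀ u w, u ∈ R → u ∈ G.posOf α → G.step s0 s1 u = some w → w ∈ R →
        σR u = some w := by
      intro u w hu huα hsw hwR
      rw [hstepA u huα] at hsw
      rcases sigA_some_cases hu hsw with hc | ⟨hn, -, -, hm, -⟩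
      · exact hc
      · have hesc := hnone u hu huα hn
        rw [G.esc_mem_alpha hα huα] at hesc
        exact absurd hwR (hesc.2 w hm).2
    have hInv : ∀ n u, G.play s0 s1 v n = some u → u ∈ G.atr α R := by
      intro n
      induction n with
      | zero =>
        intro u hu
        have : v = u := by
          have h0 : G.play s0 s1 v 0 = some v := rfl
          rw [h0] at hu
          exact Option.some.inj hu
        exact this ▸ hv
      | succ n ih =>
        intro u hu
        simp only [PGame.play] at hu
        obtain ⟨w, hw, hsw⟩ := Option.bind_eq_some_iff.mp hu
        exact (hstep1 w u (ih w hw) hsw).1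
    refine ⟨?_, ?_⟩
    · -- infinite plays
      intro hinf
      have hex : ∀ n, ∃ u, G.play s0 s1 v n = some u := fun n =>
        Option.isSome_iff_exists.mp (hinf n)
      choose vn hvn using hex
      have hvnA : ∀ n, vn n ∈ G.atr α R := fun n => hInv n _ (hvn n)
      have hstepn : ∀ n, G.step s0 s1 (vn n) = some (vn (n + 1)) := by
        intro n
        have h1 := hvn (n + 1)
        simp only [PGame.play] at h1
        rw [hvn n] at h1
        simpa using h1
      have hprn : ∀ n, G.playPr s0 s1 v n = G.pr (vn n) := by
        intro n
        simp [PGame.playPr, hvn n]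
      have hble : ∀ n, G.playPr s0 s1 v n ≤ G.maxPr := by
        intro n
        rw [hprn n]
        exact le_csSup (G.finpos.image G.pr).bddAbove ⟨vn n, hApos (hvnA n), rfl⟩
      have hfreqR : ∀ N, ∃ n, N ≤ n ∧ vn n ∈ R := by
        have key : ∀ k N, rkA G α R (vn N) < k → ∃ n, N ≤ n ∧ vn n ∈ R := by
          intro k
          induction k with
          | zero => intro N h; omega
          | succ k ih =>
            intro N h
            by_cases hR' : vn N ∈ R
            · exact ⟨N, le_rfl, hR'⟩
            · have hdec : vn (N + 1) ∈ itA G α R (rkA G α R (vn N) - 1) :=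
                hstep3 (vn N) (vn (N + 1)) (hvnA N) hR' (hstepn N)
              have h1 : rkA G α R (vn (N + 1)) ≤ rkA G α R (vn N) - 1 :=
                G.rkA_le α R hdec
              have h2 : rkA G α R (vn N) ≠ 0 := G.rkA_ne_zero α R (hvnA N)
              obtain ⟨n, hn, hnR⟩ := ih (N + 1) (by omega)
              exact ⟨n, by omega, hnR⟩
        intro N
        exact key (rkA G α R (vn N) + 1) N (by omega)
      by_cases hev : ∃ N, ∀ n, N ≤ n → vn n ∈ R
      · -- the play eventually remains in `R`
        obtain ⟨N, hN⟩ := hev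
        set σb' : V → Option V := fun w =>
          if h : w ∈ R ∧ ∃ u, σb w = some u ∧ u ∈ R then some h.2.choose
          else none with hσb'
        have hstrat' : G.IsStrat (1 - α) R σb' := by
          intro w u hw
          simp only [hσb'] at hw
          by_cases h : w ∈ R ∧ ∃ u, σb w = some u ∧ u ∈ R
          · rw [dif_pos h] at hw
            have spec := h.2.choose_spec
            have he : h.2.choose = u := by injection hw
            rw [he] at spec
            obtain ⟨⟨-, hwβ⟩, -, hm⟩ := hσb w u spec.1
            exact ⟨⟨h.1, hwβ⟩, spec.2, hm⟩
          · rw [dif_neg h] at hw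
            simp at hw
        have hdom' : G.intOf (1 - α) R ⊆ {w | (σb' w).isSome} := by
          intro w hw
          have hwβ : w ∈ G.posOf (1 - α) := hw.1.2
          obtain ⟨hwR, hall⟩ := (G.int_mem_beta hα hwβ).mp hw
          have hintA : w ∈ G.intOf (1 - α) (G.atr α R) := by
            rw [G.int_mem_beta hα hwβ]
            exact ⟨hRA hwR, fun u hm => hRA (hall u hm)⟩
          obtain ⟨u, hu⟩ := Option.isSome_iff_exists.mp (hdomb hintA)
          have hm := (hσb w u hu).2.2
          have hc : w ∈ R ∧ ∃ x, σb w = some x ∧ x ∈ R := ⟨hwR, u, hu, hall u hm⟩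
          show (σb' w).isSome
          simp only [hσb', dif_pos hc, Option.isSome_some]
        have hmatch : ∀ n, G.play (if α = 0 then σR else σb') (if α = 0 then σb' else σR)
            (vn N) n = some (vn (N + n)) := by
          intro n
          induction n with
          | zero => rfl
          | succ n ih =>
            simp only [PGame.play, ih, Option.bind_some]
            have huR : vn (N + n) ∈ R := hN _ (by omega)
            have huR1 : vn (N + n + 1) ∈ R := hN _ (by omega)
            have hpos : vn (N + n) ∈ G.pos := hApos (hvnA _)
            rcases G.pos_mem_cases hα hpos with huα | huβ
            · rw [G.step_alpha hα σR σb' huα]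
              exact hstep5 _ _ huR huα (hstepn (N + n)) huR1
            · rw [G.step_beta hα σR σb' huβ]
              have hsb := hstepn (N + n)
              rw [hstepB _ huβ] at hsb
              have hc : vn (N + n) ∈ R ∧ ∃ x, σb (vn (N + n)) = some x ∧ x ∈ R :=
                ⟨huR, _, hsb, huR1⟩
              simp only [hσb', dif_pos hc]
              exact hc.2.choose_spec.1.symm.trans hsb
        have hinf' : ∀ n, (G.play (if α = 0 then σR else σb') (if α = 0 then σb' else σR)
            (vn N) n).isSome := fun n => by rw [hmatch n]; rfl
        have hlim := (hplayR σb' hstrat' hdom' (vn N) (hN N le_rfl)).1 hinf'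
        have hfun : G.playPr (if α = 0 then σR else σb') (if α = 0 then σb' else σR) (vn N)
            = fun n => G.playPr s0 s1 v (N + n) := by
          funext n
          simp [PGame.playPr, hmatch n, hvn (N + n)]
        rw [hfun, limsup_shift] at hlim
        exact hlim
      · -- the play exits `R` infinitely often
        push_neg at hev
        have hcross : ∀ N, ∃ n, N ≤ n ∧ vn n ∈ R ∧ vn (n + 1) ∉ R := by
          intro N
          obtain ⟨r, hr, hrR⟩ := hfreqR N
          obtain ⟨m, hm, hmR⟩ := hev (r + 1)
          have hP : ∃ j, vn (r + j) ∉ R := ⟨m - r, by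
            have he : r + (m - r) = m := by omega
            rw [he]; exact hmR⟩
          have hspec : vn (r + Nat.find hP) ∉ R := Nat.find_spec hP
          have hj0ne : Nat.find hP ≠ 0 := by
            intro h
            rw [h] at hspec
            exact hspec hrR
          have hprev : vn (r + (Nat.find hP - 1)) ∈ R :=
            not_not.mp (Nat.find_min hP (by omega))
          refine ⟨r + (Nat.find hP - 1), by omega, hprev, ?_⟩
          have he : r + (Nat.find hP - 1) + 1 = r + Nat.find hP := by omega
          rw [he]
          exact hspec
        have hfreqM : ∀ N, ∃ n, N ≤ n ∧ G.playPr s0 s1 v n = G.maxPr := by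
          intro N
          obtain ⟨n, hn, hnR, hn1R⟩ := hcross N
          have hescn : vn n ∈ G.esc (1 - α) R :=
            hstep4 (vn n) (vn (n + 1)) hnR (hstepn n) hn1R
          exact ⟨n, hn, by rw [hprn n]; exact hescpr _ hescn⟩
        rw [limsup_eq_of_freq _ G.maxPr hble hfreqM]
        exact hpar
    · -- finite plays end in the escape of the attractor
      intro n u hn hn1
      simp only [PGame.play] at hn1
      rw [hn] at hn1
      simp only [Option.bind_some] at hn1
      exact hstep2 u (hInv n u hn) hn1
  · exact G.atr_maximal α R
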